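/- Let f_1, f_2 ∈ K[X] (K a field) with f := f_1 − t f_2 ∈ K(t)[X], and let y be a root of f over K(t). If the two-variable polynomial f_1(X) f_2(Y) − f_2(X) f_1(Y) ∈ K[X,Y] factors with irreducible factors of X-degrees 1, 10, 16, then the point stabilizer of Gal(f / K(t)) (acting on the 27 roots of f) has orbits of sizes 1, 10, and 16. -/

import Mathlib

open Polynomial

set_option maxHeartbeats 4000000
set_option synthInstance.maxHeartbeats 1000000

private lemma natDegree_eq_of_assoc {R : Type*} [CommRing R] [IsDomain R] {u v : R[X]}
    (h : Associated u v) (hu : u ≠ 0) : u.natDegree = v.natDegree := by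
  obtain ⟨w, rfl⟩ := h
  rw [Polynomial.natDegree_mul hu (w.isUnit.ne_zero),
    Polynomial.natDegree_eq_zero_of_isUnit w.isUnit, add_zero]

/-- let `f = f₁ − t f₂ ∈ K(t)[X]` be separable of degree 27.
If `f₁(X) f₂(Y) − f₂(X) f₁(Y) ∈ K[Y][X]` factors into irreducible factors of
`X`-degrees 1, 10 and 16, then for any root `y` of `f`, the point stabilizer
of `Gal(f/K(t))` at `y` (acting on the roots of `f` in its splitting field)
has orbits of sizes 1, 10 and 16. -/
theorem stabilizer_orbits_from_factorization
    {K : Type*} [Field K] (f1 f2 : Polynomial K)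
    (F : Polynomial (RatFunc K))
    (hF : F = f1.map (algebraMap K (RatFunc K)) -
      Polynomial.C RatFunc.X * f2.map (algebraMap K (RatFunc K)))
    (hdeg : F.natDegree = 27) (hsep : F.Separable)
    (P : Polynomial (Polynomial K))
    (hP : P = f1.map Polynomial.C * Polynomial.C f2 -
      f2.map Polynomial.C * Polynomial.C f1)
    (hfact : ∃ p q r : Polynomial (Polynomial K), P = p * q * r ∧
      Irreducible p ∧ Irreducible q ∧ Irreducible r ∧
      p.natDegree = 1 ∧ q.natDegree = 10 ∧ r.natDegree = 16) :
    ∀ y : F.rootSet F.SplittingField,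
      ∃ a b c : F.rootSet F.SplittingField,
        (MulAction.orbit (MulAction.stabilizer F.Gal y) a).ncard = 1 ∧
        (MulAction.orbit (MulAction.stabilizer F.Gal y) b).ncard = 10 ∧
        (MulAction.orbit (MulAction.stabilizer F.Gal y) c).ncard = 16 ∧
        ∀ z : F.rootSet F.SplittingField,
          MulAction.orbit (MulAction.stabilizer F.Gal y) z =
              MulAction.orbit (MulAction.stabilizer F.Gal y) a ∨
            MulAction.orbit (MulAction.stabilizer F.Gal y) z =
              MulAction.orbit (MulAction.stabilizer F.Gal y) b ∨
            MulAction.orbit (MulAction.stabilizer F.Gal y) z =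
              MulAction.orbit (MulAction.stabilizer F.Gal y) c := by
  classical
  obtain ⟨p, q, r, hPf, hip, hiq, hir, hdp, hdq, hdr⟩ := hfact
  intro y
  set L := F.SplittingField with hLdef
  -- elementary nonvanishing facts
  have hF0 : F ≠ 0 := fun h => by simp [h] at hdeg
  have hP0 : P ≠ 0 := hPf ▸ mul_ne_zero (mul_ne_zero hip.ne_zero hiq.ne_zero) hir.ne_zero
  have hf2 : f2 ≠ 0 := by rintro rfl; exact hP0 (by simp [hP])
  set y0 : L := (y : L) with hy0def
  have hy : (Polynomial.aeval y0) F = 0 := (Polynomial.mem_rootSet.mp y.2).2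
  set t' : L := algebraMap (RatFunc K) L RatFunc.X with ht'def
  have key1 : (Polynomial.aeval y0) f1 = t' * (Polynomial.aeval y0) f2 := by
    have hy' : (Polynomial.aeval y0) (f1.map (algebraMap K (RatFunc K)) -
        Polynomial.C RatFunc.X * f2.map (algebraMap K (RatFunc K))) = 0 := by
      rw [← hF]; exact hy
    rw [map_sub, map_mul, aeval_C, aeval_map_algebraMap, aeval_map_algebraMap,
      sub_eq_zero] at hy'
    exact hy'
  -- f2 does not vanish at y0
  have hb : (Polynomial.aeval y0) f2 ≠ 0 := by
    intro hb0
    have ha0 : (Polynomial.aeval y0) f1 = 0 := by rw [key1, hb0, mul_zero]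
    set g : Polynomial K := EuclideanDomain.gcd f1 f2 with hgdef
    have hg0 : g ≠ 0 := fun h => hf2 (EuclideanDomain.gcd_eq_zero_iff.mp h).2
    have hgy : (Polynomial.aeval y0) g = 0 := by
      rw [hgdef, EuclideanDomain.gcd_eq_gcd_ab f1 f2]
      simp [ha0, hb0]
    have hgu : ¬ IsUnit g := by
      intro hu
      obtain ⟨c, hc, hcg⟩ := Polynomial.isUnit_iff.mp hu
      rw [← hcg, aeval_C] at hgy
      exact hc.ne_zero ((_root_.map_eq_zero (algebraMap K L)).mp hgy)
    obtain ⟨π, hπ, hπd⟩ := WfDvdMonoid.exists_irreducible_factor hgu hg0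
    have hπp : Prime (Polynomial.C π : (Polynomial K)[X]) :=
      Polynomial.prime_C_iff.mpr (UniqueFactorizationMonoid.irreducible_iff_prime.mp hπ)
    have hdvd : (Polynomial.C π : (Polynomial K)[X]) ∣ P := by
      have h1 : π ∣ f1 := hπd.trans (EuclideanDomain.gcd_dvd_left f1 f2)
      have h2 : π ∣ f2 := hπd.trans (EuclideanDomain.gcd_dvd_right f1 f2)
      rw [hP]
      exact dvd_sub ((_root_.map_dvd Polynomial.C h2).mul_left _) ((_root_.map_dvd Polynomial.C h1).mul_left _)
    have hdeg0 : ∀ w : (Polynomial K)[X], Irreducible w →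
        (Polynomial.C π : (Polynomial K)[X]) ∣ w → w.natDegree = 0 := by
      rintro w hw ⟨d, hd⟩
      rcases hw.isUnit_or_isUnit hd with h | h
      · exact absurd h hπp.not_unit
      · rw [hd, Polynomial.natDegree_mul hπp.ne_zero h.ne_zero,
          Polynomial.natDegree_C, Polynomial.natDegree_eq_zero_of_isUnit h]
    rw [hPf] at hdvd
    rcases hπp.2.2 _ _ hdvd with h | h
    · rcases hπp.2.2 _ _ h with h' | h'
      · rw [hdeg0 p hip h'] at hdp; exact one_ne_zero hdp.symm
      · rw [hdeg0 q hiq h'] at hdq; simp at hdq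
    · rw [hdeg0 r hir h] at hdr; simp at hdr
  -- transcendence
  have htX : Transcendental K (RatFunc.X : RatFunc K) := by
    rw [← RatFunc.algebraMap_X]
    exact (transcendental_algebraMap_iff
      (IsFractionRing.injective _ _)).mpr (Polynomial.transcendental_X K)
  have htt' : Transcendental K t' :=
    (transcendental_algebraMap_iff (algebraMap (RatFunc K) L).injective).mpr htX
  have hy0t : Transcendental K y0 := by
    intro halg
    apply htt'
    have hint : IsIntegral K y0 := halg.isIntegral
    have hsub : Algebra.adjoin K {y0} ≤ integralClosure K L :=
      Algebra.adjoin_le_iff.mpr (Set.singleton_subset_iff.mpr hint)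
    have h1 : IsIntegral K ((Polynomial.aeval y0) f1) :=
      hsub (Polynomial.aeval_mem_adjoin_singleton K y0)
    have h2 : IsIntegral K ((Polynomial.aeval y0) f2) :=
      hsub (Polynomial.aeval_mem_adjoin_singleton K y0)
    have ht'eq : t' = (Polynomial.aeval y0) f1 * ((Polynomial.aeval y0) f2)⁻¹ := by
      rw [key1, mul_assoc, mul_inv_cancel₀ hb, mul_one]
    rw [ht'eq]
    exact (h1.mul h2.inv).isAlgebraic
  have hinj : Function.Injective (Polynomial.aeval y0 : Polynomial K →ₐ[K] L) := by
    rw [injective_iff_map_eq_zero]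
    intro w hw
    by_contra hw0
    exact hy0t ⟨w, hw0, hw⟩
  -- the lift of `aeval y0` to the rational function field
  set χ : RatFunc K →ₐ[K] L := IsFractionRing.liftAlgHom hinj with hχdef
  have hχa : ∀ w : Polynomial K, χ (algebraMap (Polynomial K) (RatFunc K) w)
      = (Polynomial.aeval y0) w := by
    intro w
    rw [hχdef, IsFractionRing.liftAlgHom_apply, IsFractionRing.lift_algebraMap]
    rfl
  -- the subfield E = K(t)(y0)
  set E : IntermediateField (RatFunc K) L := IntermediateField.adjoin (RatFunc K) {y0}
    with hEdef
  haveI : IsScalarTower K E L := IsScalarTower.of_algebraMap_eq fun _ => rfl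
  -- algebraMap (RatFunc K) L  through polynomials in t'
  have hKtL : ∀ w : Polynomial K,
      algebraMap (RatFunc K) L (algebraMap (Polynomial K) (RatFunc K) w)
        = (Polynomial.aeval t') w := by
    intro w
    have h2 : ((IsScalarTower.toAlgHom K (RatFunc K) L).comp
        (IsScalarTower.toAlgHom K (Polynomial K) (RatFunc K))) = Polynomial.aeval t' := by
      apply Polynomial.algHom_ext
      simp [RatFunc.algebraMap_X]
      exact ht'def.symm
    exact congrFun (congrArg (fun ψ => ψ.toFun) h2) w
  -- t' is in the range of χ
  set s : RatFunc K := algebraMap (Polynomial K) (RatFunc K) f1 /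
      algebraMap (Polynomial K) (RatFunc K) f2 with hsdef
  have hχs : χ s = t' := by
    rw [hsdef, map_div₀, hχa, hχa, key1]
    exact mul_div_cancel_right₀ _ hb
  -- every element of E lies in the range of χ
  have hrange : ∀ x : L, x ∈ E → ∃ w : RatFunc K, χ w = x := by
    have hsub : E.toSubfield ≤ χ.fieldRange.toSubfield := by
      rw [hEdef, IntermediateField.adjoin_toSubfield]
      apply Subfield.closure_le.mpr
      rintro x (⟨u, rfl⟩ | hx)
      · -- x = algebraMap (RatFunc K) L u
        induction u using RatFunc.induction_on with
        | f pp qq hqq =>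
          have : algebraMap (RatFunc K) L
              (algebraMap (Polynomial K) (RatFunc K) pp / algebraMap (Polynomial K) (RatFunc K) qq)
                = χ ((Polynomial.aeval s) pp / (Polynomial.aeval s) qq) := by
            rw [map_div₀, hKtL, hKtL, map_div₀, ← Polynomial.aeval_algHom_apply,
              ← Polynomial.aeval_algHom_apply, hχs]
          exact this ▸ ⟨_, rfl⟩
      · rcases hx with rfl
        refine ⟨algebraMap (Polynomial K) (RatFunc K) Polynomial.X, ?_⟩
        show χ _ = y0
        rw [hχa]; simp
    intro x hx
    exact hsub hx
  -- any Galois element fixing y0 fixes E pointwise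
  have hfix : ∀ σ : F.Gal, σ y0 = y0 → ∀ x ∈ E, σ x = x := by
    intro σ hσ x hx
    obtain ⟨w, rfl⟩ := hrange x hx
    have hσK : ∀ k : Polynomial K, σ ((Polynomial.aeval y0) k) = (Polynomial.aeval y0) k := by
      intro k
      have : σ ((Polynomial.aeval y0) k)
          = (Polynomial.aeval (σ y0)) k := by
        exact (Polynomial.aeval_algHom_apply (σ.toAlgHom.restrictScalars K) y0 k).symm
      rw [this, hσ]
    induction w using RatFunc.induction_on with
    | f pp qq hqq =>
      rw [map_div₀, hχa, hχa, map_div₀, hσK, hσK]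
  -- the generator of E
  set yE : E := ⟨y0, IntermediateField.mem_adjoin_simple_self (RatFunc K) y0⟩ with hyEdef
  have hvalyE : algebraMap E L yE = y0 := rfl
  have hvalaev : ∀ w : Polynomial K,
      algebraMap E L ((Polynomial.aeval yE) w) = (Polynomial.aeval y0) w := by
    intro w
    have h := (Polynomial.aeval_algHom_apply (IsScalarTower.toAlgHom K E L) yE w).symm
    have h2 : (IsScalarTower.toAlgHom K E L) yE = y0 := rfl
    rw [h2] at h
    exact h
  have hinjE : Function.Injective (Polynomial.aeval yE : Polynomial K →ₐ[K] E) := by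
    intro u v huv
    apply hinj
    show (Polynomial.aeval y0) u = (Polynomial.aeval y0) v
    rw [← hvalaev, ← hvalaev, huv]
  -- E is a fraction field of K[Y] via aeval at yE
  letI : Algebra (Polynomial K) E := ((Polynomial.aeval yE
    : Polynomial K →ₐ[K] E).toRingHom).toAlgebra
  have halgE : ∀ w : Polynomial K,
      algebraMap (Polynomial K) E w = (Polynomial.aeval yE) w := fun _ => rfl
  haveI : IsFractionRing (Polynomial K) E := by
    refine ⟨⟨?_, ?_, ?_⟩⟩
    · rintro ⟨u, hu⟩
      rw [mem_nonZeroDivisors_iff_ne_zero] at hu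
      apply isUnit_iff_ne_zero.mpr
      intro h0
      apply hu
      apply hinjE
      rw [show (Polynomial.aeval yE) u = 0 from h0]
      simp
    · intro z
      obtain ⟨w, hw⟩ := hrange (algebraMap E L z) (z.2)
      have : ∃ pp qq : Polynomial K, qq ≠ 0 ∧
          algebraMap E L z * (Polynomial.aeval y0) qq = (Polynomial.aeval y0) pp := by
        induction w using RatFunc.induction_on with
        | f pp qq hqq =>
          refine ⟨pp, qq, hqq, ?_⟩
          have hq0 : (Polynomial.aeval y0) qq ≠ 0 := by
            intro h
            exact hqq (hinj (by simpa using h))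
          rw [← hw, map_div₀, hχa, hχa, div_mul_cancel₀ _ hq0]
      obtain ⟨pp, qq, hqq, hpq⟩ := this
      refine ⟨⟨pp, ⟨qq, mem_nonZeroDivisors_of_ne_zero hqq⟩⟩, ?_⟩
      have hinjL : Function.Injective (algebraMap E L) := (algebraMap E L).injective
      apply hinjL
      rw [map_mul, halgE, halgE, hvalaev, hvalaev]
      exact hpq
    · intro u v huv
      rw [halgE, halgE] at huv
      exact ⟨1, by simp [hinjE huv]⟩
  -- Gauss's lemma: irreducible factors stay irreducible over E
  have hGauss : ∀ w : (Polynomial K)[X], Irreducible w → w.natDegree ≠ 0 →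
      Irreducible (w.map (algebraMap (Polynomial K) E)) ∧
        (w.map (algebraMap (Polynomial K) E)).natDegree = w.natDegree := by
    intro w hw hdw
    have hprim : w.IsPrimitive := by
      intro c hc
      obtain ⟨d, hd⟩ := hc
      rcases hw.isUnit_or_isUnit hd with h | h
      · exact Polynomial.isUnit_C.mp h
      · exfalso
        apply hdw
        have hc0 : (Polynomial.C c : (Polynomial K)[X]) ≠ 0 := by
          intro h0; rw [h0, zero_mul] at hd; exact hw.ne_zero hd
        rw [hd, Polynomial.natDegree_mul hc0 h.ne_zero, Polynomial.natDegree_C,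
          Polynomial.natDegree_eq_zero_of_isUnit h]
    refine ⟨(hprim.irreducible_iff_irreducible_map_fraction_map (K := E)).mp hw, ?_⟩
    exact Polynomial.natDegree_map_eq_of_injective (IsFractionRing.injective _ _) w
  -- the key identity : P specializes to (a constant multiple of) F over E
  haveI : IsScalarTower K (RatFunc K) E := inferInstance
  set FE : Polynomial E := F.map (algebraMap (RatFunc K) E) with hFEdef
  have hbE : (Polynomial.aeval yE) f2 ≠ 0 := by
    intro h
    apply hb
    rw [← hvalaev f2, h, map_zero]
  have htE : algebraMap (RatFunc K) E RatFunc.X * (Polynomial.aeval yE) f2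
      = (Polynomial.aeval yE) f1 := by
    apply (algebraMap E L).injective
    rw [map_mul, ← IsScalarTower.algebraMap_apply, hvalaev, hvalaev]
    exact key1.symm
  have hCcomp : (algebraMap (Polynomial K) E).comp (Polynomial.C : K →+* Polynomial K)
      = algebraMap K E := by
    refine RingHom.ext fun k => ?_
    show (Polynomial.aeval yE) (Polynomial.C k) = algebraMap K E k
    rw [Polynomial.aeval_C]
  have hPmap : P.map (algebraMap (Polynomial K) E)
      = Polynomial.C ((Polynomial.aeval yE) f2) * FE := by
    have hFE' : FE = f1.map (algebraMap K E)
        - Polynomial.C (algebraMap (RatFunc K) E RatFunc.X) * f2.map (algebraMap K E) := by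
      have hcg := congrArg (Polynomial.map (algebraMap (RatFunc K) E)) hF
      rw [hFEdef, hcg, Polynomial.map_sub, Polynomial.map_mul, Polynomial.map_map,
        Polynomial.map_map, Polynomial.map_C, ← IsScalarTower.algebraMap_eq]
    rw [hP, hFE']
    rw [Polynomial.map_sub, Polynomial.map_mul, Polynomial.map_mul, Polynomial.map_map,
      Polynomial.map_map, Polynomial.map_C, Polynomial.map_C, hCcomp, halgE, halgE]
    have hrel : Polynomial.C (algebraMap (RatFunc K) E RatFunc.X)
        * Polynomial.C ((Polynomial.aeval yE) f2)
        = Polynomial.C ((Polynomial.aeval yE) f1) := by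
      rw [← Polynomial.C_mul, htE]
    linear_combination (f2.map (algebraMap K E)) * hrel
  have hFE0 : FE ≠ 0 := by
    rw [hFEdef]
    exact (Polynomial.map_ne_zero_iff (algebraMap (RatFunc K) E).injective).mpr hF0
  have hFEsep : FE.Separable := hsep.map
  have hFEsplits : Polynomial.Splits (FE.map (algebraMap E L)) := by
    rw [hFEdef, Polynomial.map_map, ← IsScalarTower.algebraMap_eq]
    exact Polynomial.SplittingField.splits F
  haveI hNorm : Normal E L := Normal.tower_top_of_normal (RatFunc K) E L
  -- roots of F are roots of FE and integral over E
  have hrootFE : ∀ z : F.rootSet L, (Polynomial.aeval (z : L)) FE = 0 := by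
    intro z
    rw [hFEdef, aeval_map_algebraMap]
    exact (Polynomial.mem_rootSet.mp z.2).2
  have hintz : ∀ z : F.rootSet L, IsIntegral E (z : L) :=
    fun z => IsAlgebraic.isIntegral ⟨FE, hFE0, hrootFE z⟩
  have hmdvd : ∀ z : F.rootSet L, minpoly E (z : L) ∣ FE := fun z =>
    minpoly.dvd E _ (hrootFE z)
  -- orbit description : the stabilizer orbit of z is the set of roots of minpoly E z
  have horb : ∀ z : F.rootSet L,
      Subtype.val '' (MulAction.orbit (MulAction.stabilizer F.Gal y) z)
        = {x : L | (Polynomial.aeval x) (minpoly E (z : L)) = 0} := by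
    intro z
    apply Set.Subset.antisymm
    · rintro x ⟨w, ⟨⟨σ, hσ⟩, rfl⟩, rfl⟩
      show (Polynomial.aeval (σ (z : L))) (minpoly E (z : L)) = 0
      have hσy : σ y0 = y0 := congrArg Subtype.val hσ
      set σE : L ≃ₐ[E] L := AlgEquiv.ofRingEquiv (f := σ.toRingEquiv)
          (fun e => hfix σ hσy (e : L) e.2) with hσEdef
      have h1 : (Polynomial.aeval (σ (z : L))) (minpoly E (z : L))
          = σE ((Polynomial.aeval (z : L)) (minpoly E (z : L))) :=
        Polynomial.aeval_algHom_apply σE.toAlgHom (z : L) _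
      rw [h1, minpoly.aeval, map_zero]
    · intro x hx
      simp only [Set.mem_setOf_eq] at hx
      have hmin : minpoly E x = minpoly E (z : L) :=
        (minpoly.eq_of_irreducible_of_monic (minpoly.irreducible (hintz z)) hx
          (minpoly.monic (hintz z))).symm
      obtain ⟨g, hg⟩ := (Normal.minpoly_eq_iff_mem_orbit L (F := E)).mp hmin
      have hxF : x ∈ F.rootSet L := by
        rw [Polynomial.mem_rootSet]
        refine ⟨hF0, ?_⟩
        obtain ⟨d, hd⟩ := hmdvd z
        have hFEx : (Polynomial.aeval x) FE = 0 := by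
          rw [hd, map_mul, hx, zero_mul]
        rw [hFEdef, aeval_map_algebraMap] at hFEx
        exact hFEx
      set σ : F.Gal := g.restrictScalars (RatFunc K) with hσdef
      have hσy : σ • y = y := by
        apply Subtype.ext
        show σ y0 = y0
        have h2 : σ y0 = g y0 := rfl
        rw [h2, ← hvalyE]
        exact g.commutes yE
      refine ⟨(⟨σ, hσy⟩ : MulAction.stabilizer F.Gal y) • z, MulAction.mem_orbit _ _, ?_⟩
      exact hg
  -- the size of each orbit is the degree of the corresponding minimal polynomial
  have hcount : ∀ z : F.rootSet L,
      (MulAction.orbit (MulAction.stabilizer F.Gal y) z).ncard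
        = (minpoly E (z : L)).natDegree := by
    intro z
    have h1 : (MulAction.orbit (MulAction.stabilizer F.Gal y) z).ncard
        = (Subtype.val '' (MulAction.orbit (MulAction.stabilizer F.Gal y) z)).ncard :=
      (Set.ncard_image_of_injective _ Subtype.val_injective).symm
    have hm0 : minpoly E (z : L) ≠ 0 := minpoly.ne_zero (hintz z)
    have h2 : {x : L | (Polynomial.aeval x) (minpoly E (z : L)) = 0}
        = (minpoly E (z : L)).rootSet L := by
      ext x
      rw [Polynomial.mem_rootSet]
      exact ⟨fun h => ⟨hm0, h⟩, fun h => h.2⟩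
    rw [h1, horb z, h2]
    have hsep' : (minpoly E (z : L)).Separable := hFEsep.of_dvd (hmdvd z)
    have hsplit' : Polynomial.Splits ((minpoly E (z : L)).map (algebraMap E L)) :=
      hFEsplits.of_dvd (Polynomial.map_ne_zero hFE0) (Polynomial.map_dvd _ (hmdvd z))
    have hfc := Polynomial.card_rootSet_eq_natDegree hsep' hsplit'
    rw [← Nat.card_coe_set_eq, Nat.card_eq_fintype_card]
    convert hfc
  -- each irreducible factor of P produces a root of F whose minpoly has matching degree
  have hCFE0 : Polynomial.C ((Polynomial.aeval yE) f2) * FE ≠ 0 :=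
    mul_ne_zero (fun h => hbE (by simpa using h)) hFE0
  have hCFEsplits : Polynomial.Splits
      ((Polynomial.C ((Polynomial.aeval yE) f2) * FE).map (algebraMap E L)) := by
    rw [Polynomial.map_mul, Polynomial.map_C]; exact hFEsplits.C_mul _
  have hQs : ∀ w : (Polynomial K)[X], Irreducible w → w.natDegree ≠ 0 →
      w.map (algebraMap (Polynomial K) E) ∣ Polynomial.C ((Polynomial.aeval yE) f2) * FE →
      ∃ zz : F.rootSet L, (minpoly E (zz : L)).natDegree = w.natDegree ∧
        Associated (w.map (algebraMap (Polynomial K) E)) (minpoly E (zz : L)) := by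
    intro w hw hdw hwd
    obtain ⟨hirr, hdeg'⟩ := hGauss w hw hdw
    have hwsplits := hCFEsplits.of_dvd (Polynomial.map_ne_zero hCFE0) (Polynomial.map_dvd _ hwd)
    have hdegw : (w.map (algebraMap (Polynomial K) E)).degree ≠ 0 :=
      (Polynomial.natDegree_pos_iff_degree_pos.mp
        (Nat.pos_of_ne_zero (hdeg' ▸ hdw))).ne'
    obtain ⟨x, hx⟩ := hwsplits.exists_eval_eq_zero (by rwa [Polynomial.degree_map])
    have hxw : (Polynomial.aeval x) (w.map (algebraMap (Polynomial K) E)) = 0 := by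
      rwa [Polynomial.eval_map_algebraMap] at hx
    have hxFE : (Polynomial.aeval x) FE = 0 := by
      obtain ⟨d, hd⟩ := hwd
      have h3 : (Polynomial.aeval x) (Polynomial.C ((Polynomial.aeval yE) f2) * FE) = 0 := by
        rw [hd, map_mul, hxw, zero_mul]
      rw [map_mul, Polynomial.aeval_C] at h3
      rcases mul_eq_zero.mp h3 with h4 | h4
      · exact absurd ((_root_.map_eq_zero (algebraMap E L)).mp h4) hbE
      · exact h4
    have hxF : x ∈ F.rootSet L := by
      rw [Polynomial.mem_rootSet]
      refine ⟨hF0, ?_⟩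
      rw [hFEdef, aeval_map_algebraMap] at hxFE
      exact hxFE
    have hassoc : Associated (w.map (algebraMap (Polynomial K) E)) (minpoly E x) :=
      ((minpoly.irreducible (hintz ⟨x, hxF⟩)).associated_of_dvd hirr
        (minpoly.dvd E x hxw)).symm
    exact ⟨⟨x, hxF⟩, (natDegree_eq_of_assoc hassoc hirr.ne_zero).symm.trans hdeg', hassoc⟩
  -- the three irreducible factors over E
  have hp0 : p.natDegree ≠ 0 := by rw [hdp]; exact one_ne_zero
  have hq0 : q.natDegree ≠ 0 := by rw [hdq]; norm_num
  have hr0 : r.natDegree ≠ 0 := by rw [hdr]; norm_num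
  obtain ⟨hpirrE, hpdegE⟩ := hGauss p hip hp0
  obtain ⟨hqirrE, hqdegE⟩ := hGauss q hiq hq0
  obtain ⟨hrirrE, hrdegE⟩ := hGauss r hir hr0
  have hPmap' : (p.map (algebraMap (Polynomial K) E)) * (q.map (algebraMap (Polynomial K) E))
      * (r.map (algebraMap (Polynomial K) E))
      = Polynomial.C ((Polynomial.aeval yE) f2) * FE := by
    rw [← hPmap, hPf, Polynomial.map_mul, Polynomial.map_mul]
  have hpdvd : p.map (algebraMap (Polynomial K) E)
      ∣ Polynomial.C ((Polynomial.aeval yE) f2) * FE := by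
    rw [← hPmap']; exact dvd_mul_of_dvd_left (dvd_mul_right _ _) _
  have hqdvd : q.map (algebraMap (Polynomial K) E)
      ∣ Polynomial.C ((Polynomial.aeval yE) f2) * FE := by
    rw [← hPmap']; exact dvd_mul_of_dvd_left (dvd_mul_left _ _) _
  have hrdvd : r.map (algebraMap (Polynomial K) E)
      ∣ Polynomial.C ((Polynomial.aeval yE) f2) * FE := by
    rw [← hPmap']; exact dvd_mul_left _ _
  obtain ⟨za, hza, hzaassoc⟩ := hQs p hip hp0 hpdvd
  obtain ⟨zb, hzb, hzbassoc⟩ := hQs q hiq hq0 hqdvd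
  obtain ⟨zc, hzc, hzcassoc⟩ := hQs r hir hr0 hrdvd
  have horbeq : ∀ z zz : F.rootSet L, minpoly E (z : L) = minpoly E (zz : L) →
      MulAction.orbit (MulAction.stabilizer F.Gal y) z
        = MulAction.orbit (MulAction.stabilizer F.Gal y) zz := by
    intro z zz hzz
    apply Set.image_injective.mpr Subtype.val_injective
    rw [horb z, horb zz, hzz]
  refine ⟨za, zb, zc, ?_, ?_, ?_, ?_⟩
  · rw [hcount za, hza, hdp]
  · rw [hcount zb, hzb, hdq]
  · rw [hcount zc, hzc, hdr]
  · intro z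
    have hmz : minpoly E (z : L)
        ∣ (p.map (algebraMap (Polynomial K) E)) * (q.map (algebraMap (Polynomial K) E))
          * (r.map (algebraMap (Polynomial K) E)) := by
      rw [hPmap']
      exact (hmdvd z).trans (dvd_mul_left _ _)
    have hprime : Prime (minpoly E (z : L)) :=
      UniqueFactorizationMonoid.irreducible_iff_prime.mp (minpoly.irreducible (hintz z))
    have hkey : ∀ (w : (Polynomial K)[X]) (zz : F.rootSet L),
        Irreducible (w.map (algebraMap (Polynomial K) E)) →
        Associated (w.map (algebraMap (Polynomial K) E)) (minpoly E (zz : L)) →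
        minpoly E (z : L) ∣ w.map (algebraMap (Polynomial K) E) →
        MulAction.orbit (MulAction.stabilizer F.Gal y) z
          = MulAction.orbit (MulAction.stabilizer F.Gal y) zz := by
      intro w zz hwirr hwassoc hwdvd
      apply horbeq
      apply Polynomial.eq_of_monic_of_associated (minpoly.monic (hintz z))
        (minpoly.monic (hintz zz))
      exact ((minpoly.irreducible (hintz z)).associated_of_dvd hwirr hwdvd).trans hwassoc
    rcases hprime.2.2 _ _ hmz with h | h
    · rcases hprime.2.2 _ _ h with h' | h'
      · exact Or.inl (hkey p za hpirrE hzaassoc h')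
      · exact Or.inr (Or.inl (hkey q zb hqirrE hzbassoc h'))
    · exact Or.inr (Or.inr (hkey r zc hrirrE hzcassoc h))
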